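/- Let 0 < T < 1 and R > 0. For every t ∈ (0,T] and every x ∈ [−R, R]^d, the time derivative of the velocity field satisfies ‖∂_t v*(x, t)‖ ≤ √d (1+T²) R/(1−T²)² + 2√d T/(1−T²)² + 2 d^{3/2} (1+T²) R/(1−T²)³ + 2 d^{3/2} T/(1−T²)³; in particular sup_{t ∈ (0,T]} sup_{x ∈ [−R,R]^d} ‖∂_t v*(x, t)‖ = O(R/(1−T)³). -/

import Mathlib

open MeasureTheory
open scoped RealInnerProductSpace

/-- The Gaussian kernel `g_t(x, x₁) = exp(-‖x - t x₁‖² / (2(1-t²)))`. -/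
noncomputable def gKer (d : ℕ) (t : ℝ) (x x₁ : EuclideanSpace ℝ (Fin d)) : ℝ :=
  Real.exp (-‖x - t • x₁‖ ^ 2 / (2 * (1 - t ^ 2)))

/-- `φ_t(x) = ∫ g_t(x, x₁) dπ₁(x₁)`. -/
noncomputable def phiFn (d : ℕ) (π₁ : MeasureTheory.Measure (EuclideanSpace ℝ (Fin d))) (t : ℝ)
    (x : EuclideanSpace ℝ (Fin d)) : ℝ :=
  ∫ x₁, gKer d t x x₁ ∂π₁

/-- `m_t(x) = φ_t(x)⁻¹ ∫ x₁ g_t(x, x₁) dπ₁(x₁)`. -/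
noncomputable def mFn (d : ℕ) (π₁ : MeasureTheory.Measure (EuclideanSpace ℝ (Fin d))) (t : ℝ)
    (x : EuclideanSpace ℝ (Fin d)) : EuclideanSpace ℝ (Fin d) :=
  (phiFn d π₁ t x)⁻¹ • ∫ x₁, gKer d t x x₁ • x₁ ∂π₁

/-- The velocity field `v*(x, t) = (1/(1-t²)) m_t(x) - (t/(1-t²)) x`. -/
noncomputable def vStar (d : ℕ) (π₁ : MeasureTheory.Measure (EuclideanSpace ℝ (Fin d)))
    (x : EuclideanSpace ℝ (Fin d)) (t : ℝ) : EuclideanSpace ℝ (Fin d) :=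
  (1 / (1 - t ^ 2)) • mFn d π₁ t x - (t / (1 - t ^ 2)) • x

/-! ### Auxiliary lemmas -/

noncomputable def fD (d : ℕ) (t : ℝ) (x x₁ : EuclideanSpace ℝ (Fin d)) : ℝ :=
  ((1 + t ^ 2) * ⟪x, x₁⟫ - t * ‖x₁‖ ^ 2 - t * ‖x‖ ^ 2) / (1 - t ^ 2) ^ 2

lemma gKer_eq (d : ℕ) (t : ℝ) (x x₁ : EuclideanSpace ℝ (Fin d)) :
    gKer d t x x₁ =
      Real.exp (-(‖x‖ ^ 2 - 2 * t * ⟪x, x₁⟫ + t ^ 2 * ‖x₁‖ ^ 2) / (2 * (1 - t ^ 2))) := by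
  unfold gKer
  congr 2
  rw [norm_sub_sq_real, real_inner_smul_right, norm_smul, Real.norm_eq_abs, mul_pow, sq_abs]
  ring

lemma gKer_pos (d : ℕ) (t : ℝ) (x x₁ : EuclideanSpace ℝ (Fin d)) : 0 < gKer d t x x₁ :=
  Real.exp_pos _

lemma gKer_le_one (d : ℕ) {t : ℝ} (ht : t ^ 2 < 1) (x x₁ : EuclideanSpace ℝ (Fin d)) :
    gKer d t x x₁ ≤ 1 := by
  rw [gKer]
  apply Real.exp_le_one_iff.mpr
  apply div_nonpos_of_nonpos_of_nonneg
  · simp [sq_nonneg]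
  · nlinarith

lemma continuous_gKer (d : ℕ) (t : ℝ) (x : EuclideanSpace ℝ (Fin d)) :
    Continuous fun x₁ => gKer d t x x₁ := by
  unfold gKer; fun_prop

lemma continuous_fD (d : ℕ) (t : ℝ) (x : EuclideanSpace ℝ (Fin d)) :
    Continuous fun x₁ => fD d t x x₁ := by
  unfold fD
  apply Continuous.div_const
  apply Continuous.sub
  apply Continuous.sub
  · exact continuous_const.mul (continuous_const.inner continuous_id)
  · fun_prop
  · fun_prop

lemma hasDerivAt_gKer (d : ℕ) {t : ℝ} (ht : t ^ 2 < 1) (x x₁ : EuclideanSpace ℝ (Fin d)) :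
    HasDerivAt (fun s => gKer d s x x₁) (gKer d t x x₁ * fD d t x x₁) t := by
  have hden : (2 : ℝ) * (1 - t ^ 2) ≠ 0 := by nlinarith
  have h1 : (1 : ℝ) - t ^ 2 ≠ 0 := by nlinarith
  have hu : HasDerivAt
      (fun s : ℝ => -(‖x‖ ^ 2 - 2 * s * ⟪x, x₁⟫ + s ^ 2 * ‖x₁‖ ^ 2))
      (-(0 - 2 * ⟪x, x₁⟫ + 2 * t * ‖x₁‖ ^ 2)) t := by
    have h2 : HasDerivAt (fun s : ℝ => 2 * s * ⟪x, x₁⟫) (2 * ⟪x, x₁⟫) t := by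
      simpa using (((hasDerivAt_id t).const_mul 2).mul_const ⟪x, x₁⟫)
    have h3 : HasDerivAt (fun s : ℝ => s ^ 2 * ‖x₁‖ ^ 2) (2 * t * ‖x₁‖ ^ 2) t := by
      simpa using ((hasDerivAt_pow 2 t).mul_const (‖x₁‖ ^ 2))
    exact (((hasDerivAt_const t (‖x‖ ^ 2)).sub h2).add h3).neg
  have hw : HasDerivAt (fun s : ℝ => 2 * (1 - s ^ 2)) (2 * (0 - 2 * t)) t := by
    have h4 : HasDerivAt (fun s : ℝ => 1 - s ^ 2) (0 - 2 * t) t := by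
      simpa using ((hasDerivAt_pow 2 t).const_sub (1 : ℝ))
    exact h4.const_mul 2
  have hdiv := (hu.div hw hden).exp
  have hval : gKer d t x x₁ * fD d t x x₁ =
      Real.exp (-(‖x‖ ^ 2 - 2 * t * ⟪x, x₁⟫ + t ^ 2 * ‖x₁‖ ^ 2) / (2 * (1 - t ^ 2))) *
        ((-(0 - 2 * ⟪x, x₁⟫ + 2 * t * ‖x₁‖ ^ 2) * (2 * (1 - t ^ 2)) -
          -(‖x‖ ^ 2 - 2 * t * ⟪x, x₁⟫ + t ^ 2 * ‖x₁‖ ^ 2) * (2 * (0 - 2 * t))) /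
          (2 * (1 - t ^ 2)) ^ 2) := by
    rw [gKer_eq, fD]
    congr 1
    field_simp
    ring
  rw [hval]
  have hfun : (fun s => gKer d s x x₁) =
      fun s => Real.exp (-(‖x‖ ^ 2 - 2 * s * ⟪x, x₁⟫ + s ^ 2 * ‖x₁‖ ^ 2) / (2 * (1 - s ^ 2))) := by
    funext s; exact gKer_eq d s x x₁
  rw [hfun]
  exact hdiv

lemma euclid_norm_le (d : ℕ) {C : ℝ} (hC : 0 ≤ C) (y : EuclideanSpace ℝ (Fin d))
    (h : ∀ i, |y i| ≤ C) : ‖y‖ ≤ Real.sqrt d * C := by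
  rw [EuclideanSpace.norm_eq]
  have h1 : ∑ i, ‖y i‖ ^ 2 ≤ ∑ _i : Fin d, C ^ 2 := by
    apply Finset.sum_le_sum
    intro i _
    rw [Real.norm_eq_abs]
    exact pow_le_pow_left₀ (abs_nonneg _) (h i) 2
  calc Real.sqrt (∑ i, ‖y i‖ ^ 2) ≤ Real.sqrt (∑ _i : Fin d, C ^ 2) := Real.sqrt_le_sqrt h1
    _ = Real.sqrt (d * C ^ 2) := by simp [Finset.sum_const, mul_comm]
    _ = Real.sqrt d * C := by
        rw [Real.sqrt_mul (Nat.cast_nonneg d), Real.sqrt_sq hC]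

lemma euclid_inner_le (d : ℕ) {R C : ℝ} (x y : EuclideanSpace ℝ (Fin d))
    (hx : ∀ i, |x i| ≤ R) (hy : ∀ i, |y i| ≤ C) : |⟪x, y⟫| ≤ d * (R * C) := by
  have h0 : ⟪x, y⟫ = ∑ i, x i * y i := by
    simp [PiLp.inner_apply, RCLike.inner_apply, mul_comm]
  rw [h0]
  calc |∑ i, x i * y i| ≤ ∑ i, |x i * y i| := Finset.abs_sum_le_sum_abs _ _
    _ ≤ ∑ _i : Fin d, R * C := by
        apply Finset.sum_le_sum
        intro i _
        rw [abs_mul]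
        exact mul_le_mul (hx i) (hy i) (abs_nonneg _) ((abs_nonneg _).trans (hx i))
    _ = d * (R * C) := by simp [Finset.sum_const, mul_comm]

lemma norm_sq_le_of_coords (d : ℕ) {C : ℝ} (hC : 0 ≤ C) (y : EuclideanSpace ℝ (Fin d))
    (h : ∀ i, |y i| ≤ C) : ‖y‖ ^ 2 ≤ d * C ^ 2 := by
  have h1 := euclid_norm_le d hC y h
  calc ‖y‖ ^ 2 ≤ (Real.sqrt d * C) ^ 2 := pow_le_pow_left₀ (norm_nonneg _) h1 2
    _ = d * C ^ 2 := by rw [mul_pow, Real.sq_sqrt (Nat.cast_nonneg d)]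

lemma fD_bound (d : ℕ) {s R : ℝ} (x x₁ : EuclideanSpace ℝ (Fin d))
    (hs : s ^ 2 < 1) (hR : 0 ≤ R)
    (hx : ∀ i, |x i| ≤ R) (hx₁ : ∀ i, x₁ i ∈ Set.Icc (0 : ℝ) 1) :
    |fD d s x x₁| ≤ (2 * (d * R) + d + d * R ^ 2) / (1 - s ^ 2) ^ 2 := by
  have hx₁' : ∀ i, |x₁ i| ≤ 1 := fun i => abs_le.mpr ⟨by linarith [(hx₁ i).1], (hx₁ i).2⟩
  have hs1 : |s| ≤ 1 := by nlinarith [abs_nonneg s, sq_abs s]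
  have hb : |⟪x, x₁⟫| ≤ d * R := by
    have := euclid_inner_le d x x₁ hx hx₁'; simpa using this
  have hc : ‖x₁‖ ^ 2 ≤ (d : ℝ) := by
    have := norm_sq_le_of_coords d zero_le_one x₁ hx₁'; simpa using this
  have ha : ‖x‖ ^ 2 ≤ (d : ℝ) * R ^ 2 := norm_sq_le_of_coords d hR x hx
  have hden : (0 : ℝ) < (1 - s ^ 2) ^ 2 := pow_pos (by nlinarith) 2
  rw [fD, abs_div, abs_of_pos hden]
  apply div_le_div₀ (by positivity) _ hden le_rfl
  have h1s : |1 + s ^ 2| ≤ 2 := by rw [abs_of_nonneg (by positivity)]; nlinarith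
  calc |(1 + s ^ 2) * ⟪x, x₁⟫ - s * ‖x₁‖ ^ 2 - s * ‖x‖ ^ 2|
      ≤ |(1 + s ^ 2) * ⟪x, x₁⟫| + |s * ‖x₁‖ ^ 2| + |s * ‖x‖ ^ 2| := by
        exact (abs_sub _ _).trans (by gcongr; exact abs_sub _ _)
    _ ≤ 2 * (d * R) + d + d * R ^ 2 := by
        rw [abs_mul, abs_mul, abs_mul]
        rw [abs_of_nonneg (a := ‖x₁‖ ^ 2) (by positivity),
          abs_of_nonneg (a := ‖x‖ ^ 2) (by positivity)]
        have t1 : |1 + s ^ 2| * |⟪x, x₁⟫| ≤ 2 * (d * R) :=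
          mul_le_mul h1s hb (abs_nonneg _) (by norm_num)
        have t2 : |s| * ‖x₁‖ ^ 2 ≤ 1 * d :=
          mul_le_mul hs1 hc (by positivity) zero_le_one
        have t3 : |s| * ‖x‖ ^ 2 ≤ 1 * (d * R ^ 2) :=
          mul_le_mul hs1 ha (by positivity) zero_le_one
        linarith

set_option maxHeartbeats 2000000 in
/-- For `0 < T < 1`, `R > 0`, every `t ∈ (0,T]` and every `x ∈ [-R,R]^d`, the time
derivative of the velocity field satisfies
`‖∂ₜ v*(x,t)‖ ≤ √d(1+T²)R/(1-T²)² + 2√d T/(1-T²)² + 2d^{3/2}(1+T²)R/(1-T²)³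
+ 2d^{3/2} T/(1-T²)³`  (which is `O(R/(1-T)³)`). -/
theorem time_derivative_velocity_bound
    (d : ℕ) (hd : 1 ≤ d)
    (π₁ : Measure (EuclideanSpace ℝ (Fin d))) [IsProbabilityMeasure π₁]
    (hsupp : ∀ᵐ x₁ ∂π₁, ∀ i, x₁ i ∈ Set.Icc (0 : ℝ) 1)
    (T R : ℝ) (hT0 : 0 < T) (hT1 : T < 1) (hR : 0 < R)
    (t : ℝ) (ht : t ∈ Set.Ioc (0 : ℝ) T)
    (x : EuclideanSpace ℝ (Fin d)) (hx : ∀ i, x i ∈ Set.Icc (-R) R) :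
    ‖deriv (fun s => vStar d π₁ x s) t‖
      ≤ Real.sqrt d * (1 + T ^ 2) * R / (1 - T ^ 2) ^ 2
        + 2 * Real.sqrt d * T / (1 - T ^ 2) ^ 2
        + 2 * ((d : ℝ) * Real.sqrt d) * (1 + T ^ 2) * R / (1 - T ^ 2) ^ 3
        + 2 * ((d : ℝ) * Real.sqrt d) * T / (1 - T ^ 2) ^ 3 := by
  obtain ⟨ht0, htT⟩ := ht
  have ht1 : t < 1 := lt_of_le_of_lt htT hT1
  have htsq : t ^ 2 < 1 := by nlinarith
  have hε : 0 < 1 - t ^ 2 := by nlinarith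
  have hε0 : 0 < 1 - T ^ 2 := by nlinarith
  have hεε : 1 - T ^ 2 ≤ 1 - t ^ 2 := by nlinarith
  have hxR : ∀ i, |x i| ≤ R := fun i => abs_le.mpr ⟨(hx i).1, (hx i).2⟩
  set T' : ℝ := (1 + T) / 2 with hT'def
  have hT'1 : T' < 1 := by rw [hT'def]; linarith
  have hT'0 : 0 < T' := by rw [hT'def]; linarith
  have hT'sq : T' ^ 2 < 1 := by nlinarith
  set δ : ℝ := (1 - T) / 2 with hδdef
  have hδ : 0 < δ := by rw [hδdef]; linarith
  have hball : ∀ s ∈ Metric.ball t δ, s ^ 2 ≤ T' ^ 2 := by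
    intro s hs
    rw [Metric.mem_ball, Real.dist_eq] at hs
    have h1 : |s| ≤ T' := by
      have h2 : |s| - |t| ≤ |s - t| := abs_sub_abs_le_abs_sub s t
      have h3 : |t| = t := abs_of_pos ht0
      rw [hT'def]; rw [hδdef] at hs
      linarith [h3 ▸ h2]
    calc s ^ 2 = |s| ^ 2 := (sq_abs s).symm
      _ ≤ T' ^ 2 := pow_le_pow_left₀ (abs_nonneg s) h1 2
  have hball1 : ∀ s ∈ Metric.ball t δ, s ^ 2 < 1 := fun s hs =>
    lt_of_le_of_lt (hball s hs) hT'sq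
  -- bound for the t-derivative of the kernel, uniform over the ball
  set B : ℝ := (2 * (d * R) + d + d * R ^ 2) / (1 - T' ^ 2) ^ 2 with hBdef
  have hsd : (0 : ℝ) ≤ Real.sqrt d := Real.sqrt_nonneg d
  have hF'bd : ∀ᵐ x₁ ∂π₁, ∀ s ∈ Metric.ball t δ,
      ‖gKer d s x x₁ * fD d s x x₁‖ ≤ B := by
    filter_upwards [hsupp] with x₁ h1
    intro s hs
    have hs1 := hball1 s hs
    rw [Real.norm_eq_abs, abs_mul, abs_of_pos (gKer_pos d s x x₁)]
    calc gKer d s x x₁ * |fD d s x x₁|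
        ≤ 1 * ((2 * (d * R) + d + d * R ^ 2) / (1 - s ^ 2) ^ 2) :=
          mul_le_mul (gKer_le_one d hs1 x x₁) (fD_bound d x x₁ hs1 hR.le hxR h1)
            (abs_nonneg _) zero_le_one
      _ ≤ B := by
          rw [one_mul, hBdef]
          apply div_le_div_of_nonneg_left (by positivity) (pow_pos (by nlinarith) 2)
          have := hball s hs
          apply pow_le_pow_left₀ (by nlinarith) (by nlinarith) 2
  have hmeas : ∀ s : ℝ, AEStronglyMeasurable (fun x₁ => gKer d s x x₁) π₁ := fun s =>
    (continuous_gKer d s x).aestronglyMeasurable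
  have hint : ∀ {s : ℝ}, s ^ 2 < 1 → Integrable (fun x₁ => gKer d s x x₁) π₁ := by
    intro s hs
    refine (integrable_const (1 : ℝ)).mono' (hmeas s) ?_
    filter_upwards with x₁
    rw [Real.norm_eq_abs, abs_of_pos (gKer_pos d s x x₁)]
    exact gKer_le_one d hs x x₁
  have hdiff : ∀ᵐ x₁ ∂π₁, ∀ s ∈ Metric.ball t δ,
      HasDerivAt (fun u => gKer d u x x₁) (gKer d s x x₁ * fD d s x x₁) s := by
    filter_upwards with x₁ s hs
    exact hasDerivAt_gKer d (hball1 s hs) x x₁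
  have hφkey := hasDerivAt_integral_of_dominated_loc_of_deriv_le (μ := π₁)
    (F := fun s x₁ => gKer d s x x₁)
    (F' := fun s x₁ => gKer d s x x₁ * fD d s x x₁) (bound := fun _ => B) (Metric.ball_mem_nhds t hδ)
    (Filter.Eventually.of_forall hmeas) (hint htsq)
    (((continuous_gKer d t x).mul (continuous_fD d t x)).aestronglyMeasurable)
    hF'bd (integrable_const B) hdiff
  -- vector version
  have hsupp1 : ∀ᵐ x₁ ∂π₁, ∀ i, |x₁ i| ≤ 1 := by
    filter_upwards [hsupp] with x₁ h1 i
    exact abs_le.mpr ⟨by linarith [(h1 i).1], (h1 i).2⟩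
  have hnx₁ : ∀ᵐ x₁ ∂π₁, ‖x₁‖ ≤ Real.sqrt d := by
    filter_upwards [hsupp1] with x₁ h1
    simpa using euclid_norm_le d zero_le_one x₁ h1
  have hgx_int : Integrable (fun x₁ => gKer d t x x₁ • x₁) π₁ := by
    refine (integrable_const (Real.sqrt d)).mono'
      ((continuous_gKer d t x).smul continuous_id).aestronglyMeasurable ?_
    filter_upwards [hnx₁] with x₁ h1
    rw [norm_smul, Real.norm_eq_abs, abs_of_pos (gKer_pos d t x x₁)]
    calc gKer d t x x₁ * ‖x₁‖ ≤ 1 * Real.sqrt d :=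
      mul_le_mul (gKer_le_one d htsq x x₁) h1 (norm_nonneg _) zero_le_one
      _ = Real.sqrt d := one_mul _
  have hF'bdv : ∀ᵐ x₁ ∂π₁, ∀ s ∈ Metric.ball t δ,
      ‖(gKer d s x x₁ * fD d s x x₁) • x₁‖ ≤ B * Real.sqrt d := by
    filter_upwards [hF'bd, hnx₁] with x₁ h1 h2
    intro s hs
    rw [norm_smul]
    exact mul_le_mul (h1 s hs) h2 (norm_nonneg _) ((norm_nonneg _).trans (h1 s hs))
  have hdiffv : ∀ᵐ x₁ ∂π₁, ∀ s ∈ Metric.ball t δ,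
      HasDerivAt (fun u => gKer d u x x₁ • x₁) ((gKer d s x x₁ * fD d s x x₁) • x₁) s := by
    filter_upwards with x₁ s hs
    exact (hasDerivAt_gKer d (hball1 s hs) x x₁).smul_const x₁
  have hNkey := hasDerivAt_integral_of_dominated_loc_of_deriv_le (μ := π₁)
    (F := fun s x₁ => gKer d s x x₁ • x₁)
    (F' := fun s x₁ => (gKer d s x x₁ * fD d s x x₁) • x₁)
    (bound := fun _ => B * Real.sqrt d) (Metric.ball_mem_nhds t hδ)
    (Filter.Eventually.of_forall fun s =>
      ((continuous_gKer d s x).smul continuous_id).aestronglyMeasurable)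
    hgx_int
    ((((continuous_gKer d t x).mul (continuous_fD d t x)).smul
      continuous_id).aestronglyMeasurable)
    hF'bdv (integrable_const _) hdiffv
  -- notation
  set φ : ℝ := phiFn d π₁ t x with hφdef
  set N : EuclideanSpace ℝ (Fin d) := ∫ x₁, gKer d t x x₁ • x₁ ∂π₁ with hNdef
  set φ' : ℝ := ∫ x₁, gKer d t x x₁ * fD d t x x₁ ∂π₁ with hφ'def
  set N' : EuclideanSpace ℝ (Fin d) :=
    ∫ x₁, (gKer d t x x₁ * fD d t x x₁) • x₁ ∂π₁ with hN'def
  set m : EuclideanSpace ℝ (Fin d) := mFn d π₁ t x with hmdef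
  -- positivity of φ
  have hφpos : 0 < φ := by
    have hlb : ∀ᵐ x₁ ∂π₁, Real.exp (-(d * (R + 1) ^ 2) / (2 * (1 - t ^ 2))) ≤ gKer d t x x₁ := by
      filter_upwards [hsupp1] with x₁ h1
      rw [gKer]
      apply Real.exp_le_exp.mpr
      have hcoord : ∀ i, |(x - t • x₁) i| ≤ R + 1 := by
        intro i
        have he : (x - t • x₁) i = x i - t * x₁ i := rfl
        rw [he]
        have h2 : |t * x₁ i| ≤ 1 := by
          rw [abs_mul, abs_of_pos ht0]
          exact mul_le_one₀ (le_of_lt ht1) (abs_nonneg _) (h1 i)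
        calc |x i - t * x₁ i| ≤ |x i| + |t * x₁ i| := abs_sub _ _
          _ ≤ R + 1 := add_le_add (hxR i) h2
      have hsq : ‖x - t • x₁‖ ^ 2 ≤ d * (R + 1) ^ 2 :=
        norm_sq_le_of_coords d (by linarith) _ hcoord
      have hden2 : (0 : ℝ) < 2 * (1 - t ^ 2) := by nlinarith
      exact (div_le_div_iff_of_pos_right hden2).mpr (neg_le_neg hsq)
    have hmono := integral_mono_ae
      (integrable_const (Real.exp (-(d * (R + 1) ^ 2) / (2 * (1 - t ^ 2)))))
      (hint htsq) hlb
    rw [integral_const] at hmono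
    simp only [measure_univ, ENNReal.toReal_one, probReal_univ, smul_eq_mul, one_mul] at hmono
    exact lt_of_lt_of_le (Real.exp_pos _) hmono
  have hφne : φ ≠ 0 := ne_of_gt hφpos
  -- m facts
  have hmN : m = φ⁻¹ • N := rfl
  have hNφm : N = φ • m := by
    rw [hmN, smul_smul, mul_inv_cancel₀ hφne, one_smul]
  have hgxi_int : ∀ i, Integrable (fun x₁ => gKer d t x x₁ * x₁ i) π₁ := by
    intro i
    refine (integrable_const (1 : ℝ)).mono'
      ((continuous_gKer d t x).mul ((continuous_apply i).comp (PiLp.continuous_ofLp 2 _))).aestronglyMeasurable ?_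
    filter_upwards [hsupp1] with x₁ h1
    rw [Real.norm_eq_abs, abs_mul, abs_of_pos (gKer_pos d t x x₁)]
    calc gKer d t x x₁ * |x₁ i| ≤ 1 * 1 :=
      mul_le_mul (gKer_le_one d htsq x x₁) (h1 i) (abs_nonneg _) zero_le_one
      _ = 1 := one_mul 1
  have hNi : ∀ i, N i = ∫ x₁, gKer d t x x₁ * x₁ i ∂π₁ := by
    intro i
    have hc := (EuclideanSpace.proj (𝕜 := ℝ) i).integral_comp_comm hgx_int
    calc N i = (EuclideanSpace.proj (𝕜 := ℝ) i) N := rfl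
      _ = ∫ x₁, (EuclideanSpace.proj (𝕜 := ℝ) i) (gKer d t x x₁ • x₁) ∂π₁ := hc.symm
      _ = ∫ x₁, gKer d t x x₁ * x₁ i ∂π₁ := rfl
  have hmIcc : ∀ i, m i ∈ Set.Icc (0 : ℝ) 1 := by
    intro i
    have h0 : 0 ≤ N i := by
      rw [hNi]
      apply integral_nonneg_of_ae
      filter_upwards [hsupp] with x₁ h1
      exact mul_nonneg (gKer_pos d t x x₁).le (h1 i).1
    have h1 : N i ≤ φ := by
      rw [hNi, hφdef, phiFn]
      apply integral_mono_ae (hgxi_int i) (hint htsq)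
      filter_upwards [hsupp] with x₁ h2
      calc gKer d t x x₁ * x₁ i ≤ gKer d t x x₁ * 1 :=
        mul_le_mul_of_nonneg_left (h2 i).2 (gKer_pos d t x x₁).le
        _ = gKer d t x x₁ := mul_one _
    have hmi : m i = φ⁻¹ * N i := rfl
    constructor
    · rw [hmi]; exact mul_nonneg (inv_pos.mpr hφpos).le h0
    · rw [hmi]
      calc φ⁻¹ * N i ≤ φ⁻¹ * φ := mul_le_mul_of_nonneg_left h1 (inv_pos.mpr hφpos).le
        _ = 1 := inv_mul_cancel₀ hφne
  have hmcoords : ∀ i, |m i| ≤ 1 := fun i =>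
    abs_le.mpr ⟨by linarith [(hmIcc i).1], (hmIcc i).2⟩
  have hm_norm : ‖m‖ ≤ Real.sqrt d := by
    simpa using euclid_norm_le d zero_le_one m hmcoords
  -- derivative of m
  have hφder : HasDerivAt (fun s => phiFn d π₁ s x) φ' t := hφkey.2
  have hNder : HasDerivAt (fun s => ∫ x₁, gKer d s x x₁ • x₁ ∂π₁) N' t := hNkey.2
  have hminv : HasDerivAt (fun s => (phiFn d π₁ s x)⁻¹) (-φ' / φ ^ 2) t := by
    have := hφder.inv hφne
    exact this
  have hmder : HasDerivAt (fun s => mFn d π₁ s x)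
      (φ⁻¹ • N' + (-φ' / φ ^ 2) • N) t := by
    simp only [mFn]
    exact hminv.smul hNder
  -- scalar derivatives
  have hw : HasDerivAt (fun s : ℝ => 1 - s ^ 2) (0 - 2 * t) t := by
    simpa using ((hasDerivAt_pow 2 t).const_sub (1 : ℝ))
  have hden1 : (1 : ℝ) - t ^ 2 ≠ 0 := ne_of_gt hε
  have h1' : HasDerivAt (fun s : ℝ => 1 / (1 - s ^ 2)) (2 * t / (1 - t ^ 2) ^ 2) t := by
    have hq := (hasDerivAt_const t (1 : ℝ)).div hw hden1
    have e1 : 2 * t / (1 - t ^ 2) ^ 2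
        = (0 * (1 - t ^ 2) - 1 * (0 - 2 * t)) / (1 - t ^ 2) ^ 2 := by ring
    rw [e1]; exact hq
  have h2' : HasDerivAt (fun s : ℝ => s / (1 - s ^ 2)) ((1 + t ^ 2) / (1 - t ^ 2) ^ 2) t := by
    have hq := (hasDerivAt_id t).div hw hden1
    have e1 : (1 + t ^ 2) / (1 - t ^ 2) ^ 2
        = (1 * (1 - t ^ 2) - t * (0 - 2 * t)) / (1 - t ^ 2) ^ 2 := by ring
    rw [e1]; exact hq
  have hvder : HasDerivAt (fun s => vStar d π₁ x s)
      (((1 / (1 - t ^ 2)) • (φ⁻¹ • N' + (-φ' / φ ^ 2) • N)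
          + (2 * t / (1 - t ^ 2) ^ 2) • m)
        - ((1 + t ^ 2) / (1 - t ^ 2) ^ 2) • x) t := by
    simp only [vStar]
    exact (h1'.smul hmder).sub (h2'.smul_const x)
  rw [hvder.deriv]
  -- covariance identity
  set K : ℝ := ((1 + t ^ 2) * ⟪x, m⟫ - t * ‖x‖ ^ 2) / (1 - t ^ 2) ^ 2 with hKdef
  have hptwise : ∀ x₁ : EuclideanSpace ℝ (Fin d),
      (gKer d t x x₁ * (fD d t x x₁ - K)) • (x₁ - m)
        = ((gKer d t x x₁ * fD d t x x₁) • x₁ - (gKer d t x x₁ * fD d t x x₁) • m)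
          - (K • (gKer d t x x₁ • x₁) - (gKer d t x x₁ * K) • m) := by
    intro x₁
    simp only [smul_sub, mul_sub, sub_smul, smul_smul]
    rw [mul_comm K (gKer d t x x₁)]
    abel
  have hintKm : Integrable (fun x₁ => (gKer d t x x₁ * K) • m) π₁ :=
    ((hint htsq).mul_const K).smul_const m
  have hintfdm : Integrable (fun x₁ => (gKer d t x x₁ * fD d t x x₁) • m) π₁ :=
    hφkey.1.smul_const m
  have hintKx : Integrable (fun x₁ => K • (gKer d t x x₁ • x₁)) π₁ := Integrable.smul K hgx_int
  have hintfdx : Integrable (fun x₁ => (gKer d t x x₁ * fD d t x x₁) • x₁) π₁ := hNkey.1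
  have hP : Integrable (fun x₁ =>
      (gKer d t x x₁ * fD d t x x₁) • x₁ - (gKer d t x x₁ * fD d t x x₁) • m) π₁ :=
    hintfdx.sub hintfdm
  have hQ : Integrable (fun x₁ =>
      K • (gKer d t x x₁ • x₁) - (gKer d t x x₁ * K) • m) π₁ :=
    hintKx.sub hintKm
  have hsplit : (∫ x₁, (gKer d t x x₁ * (fD d t x x₁ - K)) • (x₁ - m) ∂π₁)
      = N' - φ' • m - (K • N - (φ * K) • m) := by
    rw [integral_congr_ae (Filter.Eventually.of_forall hptwise)]
    rw [integral_sub hP hQ, integral_sub hintfdx hintfdm, integral_sub hintKx hintKm,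
        integral_smul, integral_smul_const, integral_smul_const, integral_mul_const]
    rfl
  have hKNm : K • N = (φ * K) • m := by rw [hNφm, smul_smul, mul_comm]
  have hIdent : φ⁻¹ • N' + (-φ' / φ ^ 2) • N
      = φ⁻¹ • (∫ x₁, (gKer d t x x₁ * (fD d t x x₁ - K)) • (x₁ - m) ∂π₁) := by
    rw [hsplit, hKNm, sub_self, sub_zero, smul_sub, hmN, smul_smul, smul_smul,
      sub_eq_add_neg, ← neg_smul]
    congr 1
    field_simp
  set I : EuclideanSpace ℝ (Fin d) :=
    ∫ x₁, (gKer d t x x₁ * (fD d t x x₁ - K)) • (x₁ - m) ∂π₁ with hIdef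
  set C2 : ℝ := (((1 + t ^ 2) * (d * R) + t * d) / (1 - t ^ 2) ^ 2) * Real.sqrt d with hC2def
  have hfdK : ∀ x₁ : EuclideanSpace ℝ (Fin d), fD d t x x₁ - K
      = ((1 + t ^ 2) * ⟪x, x₁ - m⟫ - t * ‖x₁‖ ^ 2) / (1 - t ^ 2) ^ 2 := by
    intro x₁
    rw [fD, hKdef, inner_sub_right]
    field_simp
    ring
  have hptbound : ∀ᵐ x₁ ∂π₁, ‖(gKer d t x x₁ * (fD d t x x₁ - K)) • (x₁ - m)‖
      ≤ gKer d t x x₁ * C2 := by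
    filter_upwards [hsupp, hsupp1] with x₁ hIcc h1
    rw [norm_smul, Real.norm_eq_abs, abs_mul, abs_of_pos (gKer_pos d t x x₁), mul_assoc]
    apply mul_le_mul_of_nonneg_left _ (gKer_pos d t x x₁).le
    have hco : ∀ i, |(x₁ - m) i| ≤ 1 := by
      intro i
      have he : (x₁ - m) i = x₁ i - m i := rfl
      rw [he]
      exact abs_le.mpr ⟨by linarith [(hIcc i).1, (hmIcc i).2], by linarith [(hIcc i).2, (hmIcc i).1]⟩
    have hinn : |⟪x, x₁ - m⟫| ≤ d * R := by
      have := euclid_inner_le d x (x₁ - m) hxR hco; simpa using this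
    have hnsq : ‖x₁‖ ^ 2 ≤ (d : ℝ) := by
      have := norm_sq_le_of_coords d zero_le_one x₁ h1; simpa using this
    have hnd : ‖x₁ - m‖ ≤ Real.sqrt d := by
      simpa using euclid_norm_le d zero_le_one (x₁ - m) hco
    rw [hfdK]
    have hnum : |(1 + t ^ 2) * ⟪x, x₁ - m⟫ - t * ‖x₁‖ ^ 2|
        ≤ (1 + t ^ 2) * (d * R) + t * d := by
      calc |(1 + t ^ 2) * ⟪x, x₁ - m⟫ - t * ‖x₁‖ ^ 2|
          ≤ |(1 + t ^ 2) * ⟪x, x₁ - m⟫| + |t * ‖x₁‖ ^ 2| := abs_sub _ _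
        _ ≤ (1 + t ^ 2) * (d * R) + t * d := by
            rw [abs_mul, abs_mul, abs_of_pos (by positivity : (0:ℝ) < 1 + t ^ 2),
              abs_of_pos ht0, abs_of_nonneg (by positivity : (0:ℝ) ≤ ‖x₁‖ ^ 2)]
            exact add_le_add (mul_le_mul_of_nonneg_left hinn (by positivity))
              (mul_le_mul_of_nonneg_left hnsq ht0.le)
    rw [hC2def, abs_div, abs_of_pos (pow_pos hε 2)]
    exact mul_le_mul (div_le_div₀ (by positivity) hnum (pow_pos hε 2) le_rfl) hnd
      (norm_nonneg _) (by positivity)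
  have hIbound : ‖I‖ ≤ φ * C2 := by
    calc ‖I‖ ≤ ∫ x₁, ‖(gKer d t x x₁ * (fD d t x x₁ - K)) • (x₁ - m)‖ ∂π₁ :=
          norm_integral_le_integral_norm _
      _ ≤ ∫ x₁, gKer d t x x₁ * C2 ∂π₁ :=
          integral_mono_of_nonneg (Filter.Eventually.of_forall fun _ => norm_nonneg _)
            ((hint htsq).mul_const C2) hptbound
      _ = φ * C2 := by rw [integral_mul_const]; rfl
  have hC2nn : 0 ≤ C2 := by
    rw [hC2def]
    apply mul_nonneg (div_nonneg (by positivity) (by positivity)) hsd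
  have hMp : ‖φ⁻¹ • N' + (-φ' / φ ^ 2) • N‖ ≤ C2 := by
    rw [hIdent]
    rw [norm_smul, Real.norm_eq_abs, abs_of_pos (inv_pos.mpr hφpos)]
    calc φ⁻¹ * ‖I‖ ≤ φ⁻¹ * (φ * C2) :=
          mul_le_mul_of_nonneg_left hIbound (inv_pos.mpr hφpos).le
      _ = C2 := by field_simp
  -- final assembly
  have hx_norm : ‖x‖ ≤ Real.sqrt d * R := euclid_norm_le d hR.le x hxR
  have hT1 : ‖((1 + t ^ 2) / (1 - t ^ 2) ^ 2) • x‖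
      ≤ Real.sqrt d * (1 + T ^ 2) * R / (1 - T ^ 2) ^ 2 := by
    rw [norm_smul, Real.norm_eq_abs, abs_of_pos (by positivity)]
    calc (1 + t ^ 2) / (1 - t ^ 2) ^ 2 * ‖x‖
        ≤ ((1 + T ^ 2) / (1 - T ^ 2) ^ 2) * (Real.sqrt d * R) := by
          apply mul_le_mul _ hx_norm (norm_nonneg _) (by positivity)
          exact div_le_div₀ (by positivity) (by nlinarith) (pow_pos hε0 2)
            (pow_le_pow_left₀ hε0.le hεε 2)
      _ = Real.sqrt d * (1 + T ^ 2) * R / (1 - T ^ 2) ^ 2 := by ring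
  have hT2 : ‖(2 * t / (1 - t ^ 2) ^ 2) • m‖
      ≤ 2 * Real.sqrt d * T / (1 - T ^ 2) ^ 2 := by
    rw [norm_smul, Real.norm_eq_abs, abs_of_pos (by positivity)]
    calc 2 * t / (1 - t ^ 2) ^ 2 * ‖m‖
        ≤ (2 * T / (1 - T ^ 2) ^ 2) * Real.sqrt d := by
          apply mul_le_mul _ hm_norm (norm_nonneg _) (by positivity)
          exact div_le_div₀ (by positivity) (by linarith) (pow_pos hε0 2)
            (pow_le_pow_left₀ hε0.le hεε 2)
      _ = 2 * Real.sqrt d * T / (1 - T ^ 2) ^ 2 := by ring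
  have hT34 : ‖(1 / (1 - t ^ 2)) • (φ⁻¹ • N' + (-φ' / φ ^ 2) • N)‖
      ≤ 2 * ((d : ℝ) * Real.sqrt d) * (1 + T ^ 2) * R / (1 - T ^ 2) ^ 3
        + 2 * ((d : ℝ) * Real.sqrt d) * T / (1 - T ^ 2) ^ 3 := by
    rw [norm_smul, Real.norm_eq_abs, abs_of_pos (by positivity)]
    have step1 : 1 / (1 - t ^ 2) * ‖φ⁻¹ • N' + (-φ' / φ ^ 2) • N‖
        ≤ 1 / (1 - t ^ 2) * C2 := mul_le_mul_of_nonneg_left hMp (by positivity)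
    have step2 : 1 / (1 - t ^ 2) * C2
        = (((1 + t ^ 2) * (d * R) + t * d) * Real.sqrt d) / (1 - t ^ 2) ^ 3 := by
      rw [hC2def]
      field_simp
    have step3 : (((1 + t ^ 2) * (d * R) + t * d) * Real.sqrt d) / (1 - t ^ 2) ^ 3
        ≤ (((1 + T ^ 2) * (d * R) + T * d) * Real.sqrt d) / (1 - T ^ 2) ^ 3 := by
      apply div_le_div₀ _ _ (pow_pos hε0 3) (pow_le_pow_left₀ hε0.le hεε 3)
      · positivity
      · apply mul_le_mul_of_nonneg_right _ hsd
        have : (0:ℝ) ≤ d * R := by positivity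
        nlinarith
    have step4 : (((1 + T ^ 2) * (d * R) + T * d) * Real.sqrt d) / (1 - T ^ 2) ^ 3
        ≤ 2 * ((d : ℝ) * Real.sqrt d) * (1 + T ^ 2) * R / (1 - T ^ 2) ^ 3
          + 2 * ((d : ℝ) * Real.sqrt d) * T / (1 - T ^ 2) ^ 3 := by
      rw [← add_div]
      apply div_le_div₀ _ _ (pow_pos hε0 3) le_rfl
      · positivity
      · have h1 : (0:ℝ) ≤ (d : ℝ) * Real.sqrt d * ((1 + T ^ 2) * R) := by positivity
        have h2 : (0:ℝ) ≤ (d : ℝ) * Real.sqrt d * T := by positivity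
        nlinarith
    linarith
  calc ‖(1 / (1 - t ^ 2)) • (φ⁻¹ • N' + (-φ' / φ ^ 2) • N)
        + (2 * t / (1 - t ^ 2) ^ 2) • m - ((1 + t ^ 2) / (1 - t ^ 2) ^ 2) • x‖
      ≤ ‖(1 / (1 - t ^ 2)) • (φ⁻¹ • N' + (-φ' / φ ^ 2) • N)
          + (2 * t / (1 - t ^ 2) ^ 2) • m‖ + ‖((1 + t ^ 2) / (1 - t ^ 2) ^ 2) • x‖ :=
        norm_sub_le _ _
    _ ≤ ‖(1 / (1 - t ^ 2)) • (φ⁻¹ • N' + (-φ' / φ ^ 2) • N)‖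
          + ‖(2 * t / (1 - t ^ 2) ^ 2) • m‖ + ‖((1 + t ^ 2) / (1 - t ^ 2) ^ 2) • x‖ :=
        add_le_add_left (norm_add_le _ _) _
    _ ≤ _ := by linarith
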